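/- Suppose Λ = Σ_{i=1}^r λ_i 1_{ζ_i} with λ_i ≠ 0 and ζ_1,...,ζ_r pairwise distinct points of K^n. Then for any a ∈ R, the eigenvalues of the multiplication operator M_a on A_Λ = R/I_Λ are exactly {a(ζ_1),...,a(ζ_r)}, and the evaluation functionals 1_{ζ_i} (restricted to A_Λ) are eigenvectors of M_a^t with eigenvalue a(ζ_i). -/
import Mathlib

open MvPolynomial

/-- The Hankel operator `H_Λ : p ↦ (q ↦ Λ(pq))`. -/
noncomputable def hankelOp (K : Type*) [Field K] (n : ℕ)
    (Λ : Module.Dual K (MvPolynomial (Fin n) K)) :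
    MvPolynomial (Fin n) K →ₗ[K] Module.Dual K (MvPolynomial (Fin n) K) :=
  (LinearMap.mul K (MvPolynomial (Fin n) K)).compr₂ Λ

/-- The kernel ideal `I_Λ = {p : ∀ q, Λ(pq) = 0}`. -/
def hankelIdeal (K : Type*) [Field K] (n : ℕ)
    (Λ : Module.Dual K (MvPolynomial (Fin n) K)) : Ideal (MvPolynomial (Fin n) K) where
  carrier := {p | ∀ q, Λ (p * q) = 0}
  add_mem' := by
    intro a b ha hb q
    rw [Set.mem_setOf_eq] at ha hb
    rw [add_mul, map_add, ha q, hb q, add_zero]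
  zero_mem' := by
    intro q
    rw [zero_mul, map_zero]
  smul_mem' := by
    intro c p hp q
    rw [Set.mem_setOf_eq] at hp
    have h : (c • p) * q = p * (c * q) := by rw [smul_eq_mul]; ring
    rw [h]
    exact hp _

/-- The evaluation functional `1_ζ : p ↦ p(ζ)`. -/
noncomputable def evalDual (K : Type*) [Field K] (n : ℕ) (ζ : Fin n → K) :
    Module.Dual K (MvPolynomial (Fin n) K) :=
  (MvPolynomial.aeval ζ).toLinearMap

lemma evalDual_apply (K : Type*) [Field K] (n : ℕ) (ζ : Fin n → K)
    (p : MvPolynomial (Fin n) K) : evalDual K n ζ p = eval ζ p := by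
  show aeval ζ p = eval ζ p
  rw [aeval_eq_eval₂Hom, Algebra.algebraMap_self]; rfl

/-- Interpolation polynomials: `e i` with `e i (ζ i) = 1` and `e i (ζ j) = 0` for `j ≠ i`. -/
lemma exists_interp {K : Type*} [Field K] {n r : ℕ} (ζ : Fin r → (Fin n → K))
    (hinj : Function.Injective ζ) (i : Fin r) :
    ∃ e : MvPolynomial (Fin n) K, eval (ζ i) e = 1 ∧ ∀ j, j ≠ i → eval (ζ j) e = 0 := by
  have hsep : ∀ j : Fin r, ∃ p : MvPolynomial (Fin n) K,
      eval (ζ i) p = 1 ∧ (j ≠ i → eval (ζ j) p = 0) := by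
    intro j
    by_cases hj : j = i
    · exact ⟨1, by simp, fun h => absurd hj h⟩
    · have hne : ζ j ≠ ζ i := fun h => hj (hinj h)
      obtain ⟨k, hk⟩ := Function.ne_iff.mp hne
      refine ⟨C ((ζ i k - ζ j k)⁻¹) * (X k - C (ζ j k)), ?_, fun _ => by simp⟩
      simp [inv_mul_cancel₀ (sub_ne_zero.mpr (Ne.symm hk))]
  choose p hp1 hp0 using hsep
  refine ⟨∏ j ∈ Finset.univ.erase i, p j, ?_, ?_⟩
  · rw [map_prod]
    exact Finset.prod_eq_one fun j _ => hp1 j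
  · intro j hj
    rw [map_prod]
    exact Finset.prod_eq_zero (Finset.mem_erase.mpr ⟨hj, Finset.mem_univ j⟩) (hp0 j hj)

lemma mem_hankelIdeal_iff {K : Type*} [Field K] {n r : ℕ}
    (Λ : Module.Dual K (MvPolynomial (Fin n) K))
    (lam : Fin r → K) (ζ : Fin r → (Fin n → K))
    (hlam : ∀ i, lam i ≠ 0) (hinj : Function.Injective ζ)
    (hΛ : Λ = ∑ i, lam i • evalDual K n (ζ i))
    (p : MvPolynomial (Fin n) K) :
    p ∈ hankelIdeal K n Λ ↔ ∀ i, eval (ζ i) p = 0 := by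
  have happ : ∀ q : MvPolynomial (Fin n) K,
      Λ (p * q) = ∑ i, lam i * (eval (ζ i) p * eval (ζ i) q) := by
    intro q
    rw [hΛ]
    simp [evalDual_apply]
  constructor
  · intro hp i
    obtain ⟨e, he1, he0⟩ := exists_interp ζ hinj i
    have h := hp e
    rw [happ e, Finset.sum_eq_single i
      (fun j _ hj => by rw [he0 j hj]; ring) (fun h => absurd (Finset.mem_univ i) h)] at h
    rw [he1, mul_one] at h
    rcases mul_eq_zero.mp h with h | h
    · exact absurd h (hlam i)
    · exact h
  · intro hp q
    rw [happ q]
    exact Finset.sum_eq_zero fun i _ => by rw [hp i]; ring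

/-- If `Λ = Σ λ_i 1_{ζ_i}` with nonzero weights and distinct points, the eigenvalues of
the multiplication operator `M_a` on `A_Λ` are exactly the `a(ζ_i)`, and each `1_{ζ_i}` is
an eigenvector of `M_a^t` (i.e. `a ⋆ 1_{ζ_i} = a(ζ_i) • 1_{ζ_i}`). -/
theorem eigenvalues_of_multiplication_operator (K : Type*) [Field K] [IsAlgClosed K] (n r : ℕ)
    (Λ : Module.Dual K (MvPolynomial (Fin n) K))
    (lam : Fin r → K) (ζ : Fin r → (Fin n → K))
    (hlam : ∀ i, lam i ≠ 0) (hinj : Function.Injective ζ)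
    (hΛ : Λ = ∑ i, lam i • evalDual K n (ζ i))
    (a : MvPolynomial (Fin n) K) :
    (∀ μ : K,
      Module.End.HasEigenvalue
        (LinearMap.mulLeft K (Ideal.Quotient.mk (hankelIdeal K n Λ) a) :
          Module.End K (MvPolynomial (Fin n) K ⧸ hankelIdeal K n Λ)) μ
      ↔ ∃ i, μ = MvPolynomial.eval (ζ i) a) ∧
    (∀ i, hankelOp K n (evalDual K n (ζ i)) a
        = MvPolynomial.eval (ζ i) a • evalDual K n (ζ i)) := by
  set I := hankelIdeal K n Λ with hI
  have hmem : ∀ p : MvPolynomial (Fin n) K, p ∈ I ↔ ∀ i, eval (ζ i) p = 0 :=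
    mem_hankelIdeal_iff Λ lam ζ hlam hinj hΛ
  have hCmul : ∀ (c : K) (v : MvPolynomial (Fin n) K ⧸ I),
      Ideal.Quotient.mk I (C c) * v = c • v := by
    intro c v
    obtain ⟨p, rfl⟩ := Ideal.Quotient.mk_surjective v
    rw [← map_mul, ← smul_eq_C_mul]
    rfl
  constructor
  · intro μ
    constructor
    · intro hμ
      by_contra hcon
      push_neg at hcon
      obtain ⟨v, hv⟩ := hμ.exists_hasEigenvector
      have hv0 := hv.right
      have hveq : Ideal.Quotient.mk I a * v = μ • v := by
        have := hv.apply_eq_smul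
        rwa [LinearMap.mulLeft_apply] at this
      -- build an inverse of (a - C μ) mod I
      choose e he1 he0 using fun i => exists_interp ζ hinj i
      set q : MvPolynomial (Fin n) K := ∑ i, C ((eval (ζ i) a - μ)⁻¹) * e i with hq
      have hinv : Ideal.Quotient.mk I ((a - C μ) * q) = 1 := by
        rw [show (1 : (MvPolynomial (Fin n) K ⧸ I)) = Ideal.Quotient.mk I 1 from rfl,
          Ideal.Quotient.eq]
        rw [hmem]
        intro j
        have hsum : eval (ζ j) q = (eval (ζ j) a - μ)⁻¹ := by
          rw [hq, map_sum, Finset.sum_eq_single j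
            (fun i _ hi => by rw [map_mul, he0 i j hi.symm, mul_zero]) (fun h => absurd (Finset.mem_univ j) h)]
          simp [he1 j]
        have hne : eval (ζ j) a - μ ≠ 0 := sub_ne_zero.mpr fun h => hcon j h.symm
        simp only [map_sub, map_mul, map_one, eval_C, hsum]
        rw [mul_inv_cancel₀ hne, sub_self]
      have : v = 0 := by
        calc v = (Ideal.Quotient.mk I ((a - C μ) * q)) * v := by rw [hinv, one_mul]
        _ = Ideal.Quotient.mk I q * ((Ideal.Quotient.mk I a * v) - Ideal.Quotient.mk I (C μ) * v) := by
            push_cast [map_mul, map_sub]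
            ring
        _ = 0 := by rw [hveq, hCmul, sub_self, mul_zero]
      exact hv0 this
    · rintro ⟨i, rfl⟩
      obtain ⟨e, he1, he0⟩ := exists_interp ζ hinj i
      have hv0 : Ideal.Quotient.mk I e ≠ 0 := by
        rw [Ne, Ideal.Quotient.eq_zero_iff_mem, hmem]
        push_neg
        exact ⟨i, by rw [he1]; exact one_ne_zero⟩
      refine Module.End.hasEigenvalue_of_hasEigenvector
        (x := Ideal.Quotient.mk I e) ⟨Module.End.mem_eigenspace_iff.mpr ?_, hv0⟩
      rw [LinearMap.mulLeft_apply, ← hCmul, ← map_mul, ← map_mul, Ideal.Quotient.eq, hmem]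
      intro j
      by_cases hj : j = i
      · subst hj
        simp [he1]
      · simp [he0 j hj]
  · intro i
    refine LinearMap.ext fun p => ?_
    simp only [hankelOp, LinearMap.compr₂_apply, LinearMap.mul_apply', LinearMap.smul_apply,
        evalDual_apply, map_mul, smul_eq_mul]
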